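/- For n ≥ 3 and H(φ) = (n−2)/2 + (1/2)[(n−1)cos φ − cos((n−1)φ)], one has H(π/n) > H(π/(n−1)). -/

import Mathlib

open Real

private lemma key_ineq (b : ℝ) (hb : 4 ≤ b) :
    (b + 1) * Real.cos (π / (b + 1)) > b * Real.cos (π / b) + 1 := by
  have hbpos : (0:ℝ) < b := by linarith
  have hapos : (0:ℝ) < b + 1 := by linarith
  have hπ1 : π < 3.15 := pi_lt_d2
  have hπ0 : 3.14 < π := by linarith [pi_gt_d6]
  have hu1 : |π / (b + 1)| ≤ 1 := by
    rw [abs_of_pos (by positivity)]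
    rw [div_le_one hapos]; linarith
  have hv1 : |π / b| ≤ 1 := by
    rw [abs_of_pos (by positivity)]
    rw [div_le_one hbpos]; linarith
  have hx : 1 - (π / (b+1)) ^ 2 / 2 - (π / (b+1)) ^ 4 * (5 / 96) ≤ Real.cos (π / (b+1)) := by
    have := Real.cos_bound hu1
    rw [abs_le] at this
    rw [abs_of_pos (show (0:ℝ) < π/(b+1) by positivity)] at this
    linarith [this.1]
  have hy : Real.cos (π / b) ≤ 1 - (π / b) ^ 2 / 2 + (π / b) ^ 4 * (5 / 96) := by
    have := Real.cos_bound hv1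
    rw [abs_le] at this
    rw [abs_of_pos (show (0:ℝ) < π/b by positivity)] at this
    linarith [this.2]
  have h1 : (b+1) * (1 - (π / (b+1)) ^ 2 / 2 - (π / (b+1)) ^ 4 * (5 / 96)) ≤
      (b+1) * Real.cos (π / (b+1)) := by
    exact mul_le_mul_of_nonneg_left hx (le_of_lt hapos)
  have h2 : b * Real.cos (π / b) ≤
      b * (1 - (π / b) ^ 2 / 2 + (π / b) ^ 4 * (5 / 96)) :=
    mul_le_mul_of_nonneg_left hy (le_of_lt hbpos)
  have hmain : (b+1) * (1 - (π / (b+1)) ^ 2 / 2 - (π / (b+1)) ^ 4 * (5 / 96)) >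
      b * (1 - (π / b) ^ 2 / 2 + (π / b) ^ 4 * (5 / 96)) + 1 := by
    have hπ2lt : π ^ 2 < 10 := by nlinarith
    have hπ2pos : (0:ℝ) < π ^ 2 := by positivity
    have step1 : 5 * π ^ 4 * ((b+1)^3 + b^3) < 50 * π ^ 2 * ((b+1)^3 + b^3) := by
      have hpos : (0:ℝ) < (b+1)^3 + b^3 := by positivity
      nlinarith [mul_lt_mul_of_pos_right hπ2lt (mul_pos hπ2pos hpos)]
    have step2 : 50 * ((b+1)^3 + b^3) ≤ 48 * b^2 * (b+1)^2 := by nlinarith [sq_nonneg (b-4)]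
    have num : 0 < 48 * π^2 * b^2 * (b+1)^2 - 5 * π^4 * ((b+1)^3 + b^3) := by
      nlinarith [mul_le_mul_of_nonneg_left step2 (le_of_lt hπ2pos)]
    have eq : (b+1) * (1 - (π / (b+1)) ^ 2 / 2 - (π / (b+1)) ^ 4 * (5 / 96)) -
        (b * (1 - (π / b) ^ 2 / 2 + (π / b) ^ 4 * (5 / 96)) + 1) =
        (48 * π^2 * b^2 * (b+1)^2 - 5 * π^4 * ((b+1)^3 + b^3)) / (96 * b^3 * (b+1)^3) := by
      field_simp
      ring
    rw [gt_iff_lt, ← sub_pos, eq]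
    exact div_pos num (by positivity)
  linarith

theorem H_boundary_comparison
    (n : ℕ) (hn : 3 ≤ n)
    (H : ℝ → ℝ)
    (hH : H = fun φ => (n - 2) / 2 + (1 / 2) * ((n - 1) * cos φ - cos ((n - 1) * φ))) :
    H (π / n) > H (π / (n - 1)) := by
  subst hH
  have hn3 : (3:ℝ) ≤ (n:ℝ) := by exact_mod_cast hn
  have hnpos : (0:ℝ) < (n:ℝ) := by linarith
  have hmpos : (0:ℝ) < (n:ℝ) - 1 := by linarith
  simp only
  have h1 : ((n:ℝ) - 1) * (π / (n:ℝ)) = π - π / n := by field_simp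
  have h2 : ((n:ℝ) - 1) * (π / ((n:ℝ) - 1)) = π := by field_simp
  rw [h1, h2, Real.cos_pi_sub, Real.cos_pi]
  have key : (n:ℝ) * Real.cos (π / n) > ((n:ℝ) - 1) * Real.cos (π / ((n:ℝ) - 1)) + 1 := by
    rcases eq_or_lt_of_le hn with h3 | h4
    · -- n = 3
      have : (n:ℝ) = 3 := by exact_mod_cast h3.symm
      rw [this]
      norm_num [Real.cos_pi_div_three, Real.cos_pi_div_two]
    · rcases eq_or_lt_of_le (Nat.succ_le_of_lt h4) with h4' | h5
      · -- n = 4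
        have : (n:ℝ) = 4 := by exact_mod_cast h4'.symm
        rw [this]
        norm_num [Real.cos_pi_div_four, Real.cos_pi_div_three]
        nlinarith [Real.sq_sqrt (show (0:ℝ) ≤ 2 by norm_num),
          Real.sqrt_nonneg 2]
      · -- n ≥ 5
        have hb : (4:ℝ) ≤ (n:ℝ) - 1 := by
          have : (5:ℝ) ≤ (n:ℝ) := by exact_mod_cast h5
          linarith
        have := key_ineq ((n:ℝ) - 1) hb
        simpa using this
  linarith
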